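/- Let ρ(r) be a zero proximate order with lim_{r→∞} (ln r)/r^{ρ(r)} = 0. Then there exists an entire transcendental function f such that limsup_{r→∞} ln M(r,f)/r^{ρ(r)} = 1; in particular ρ(r) is a proximate order of f. -/

import Mathlib

open Filter Set

/-- Maximum modulus of `f` on the circle of radius `r`. -/
noncomputable def maxMod (f : ℂ → ℂ) (r : ℝ) : ℝ :=
  sSup ((fun z => ‖f z‖) '' Metric.sphere (0 : ℂ) r)

namespace Stmt18

/-- Restricted Legendre transform of `W` on `[x₀, ∞)`. -/
noncomputable def psiA (W : ℝ → ℝ) (x₀ : ℝ) (n : ℕ) : ℝ :=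
  sSup ((fun x => (n : ℝ) * x - W x) '' Ici x₀)

noncomputable def coefA (W : ℝ → ℝ) (x₀ : ℝ) (n : ℕ) : ℝ :=
  Real.exp (-(psiA W x₀ n))

noncomputable def FA (W : ℝ → ℝ) (x₀ : ℝ) (r : ℝ) : ℝ :=
  ∑' n : ℕ, coefA W x₀ n * r ^ n

noncomputable def fA (W : ℝ → ℝ) (x₀ : ℝ) (z : ℂ) : ℂ :=
  ∑' n : ℕ, (coefA W x₀ n : ℂ) * z ^ n

variable {W : ℝ → ℝ} {x₀ : ℝ}

lemma coefA_pos (n : ℕ) : 0 < coefA W x₀ n := Real.exp_pos _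

lemma bddAboveA (hWpos : ∀ x, 0 < W x) (hWcont : Continuous W)
    (hcoer : Tendsto (fun x => x / W x) atTop (nhds 0)) (n : ℕ) :
    BddAbove ((fun x => (n : ℝ) * x - W x) '' Ici x₀) := by
  have h1 : ∀ᶠ x in atTop, x / W x < 1 / ((n : ℝ) + 1) :=
    hcoer.eventually (eventually_lt_nhds (by positivity))
  obtain ⟨X0, hX0⟩ := eventually_atTop.mp h1
  set X := max X0 (max x₀ 0) with hX
  obtain ⟨M, hM⟩ : BddAbove ((fun x => (n : ℝ) * x - W x) '' Icc x₀ X) :=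
    (isCompact_Icc.image_of_continuousOn
      (((continuous_const.mul continuous_id).sub hWcont).continuousOn)).bddAbove
  refine ⟨max M 0, ?_⟩
  rintro y ⟨x, hx, rfl⟩
  by_cases hxX : x ≤ X
  · exact le_max_of_le_left (hM ⟨x, ⟨hx, hxX⟩, rfl⟩)
  · push_neg at hxX
    have hx0 : (0 : ℝ) ≤ x := le_of_lt (lt_of_le_of_lt (le_max_of_le_right (le_max_right _ _)) hxX)
    have hdiv : x / W x < 1 / ((n : ℝ) + 1) := hX0 x (le_of_lt (lt_of_le_of_lt (le_max_left _ _) hxX))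
    have hW := hWpos x
    have hmul : x * ((n : ℝ) + 1) < W x := by
      rw [div_lt_div_iff₀ hW (by positivity)] at hdiv
      linarith
    have : (n : ℝ) * x - W x ≤ 0 := by nlinarith
    exact le_max_of_le_right this

lemma psi_ge (hWpos : ∀ x, 0 < W x) (hWcont : Continuous W)
    (hcoer : Tendsto (fun x => x / W x) atTop (nhds 0)) (n : ℕ) {x : ℝ} (hx : x₀ ≤ x) :
    (n : ℝ) * x - W x ≤ psiA W x₀ n :=
  le_csSup (bddAboveA hWpos hWcont hcoer n) ⟨x, hx, rfl⟩

lemma coefA_exp (n : ℕ) (x : ℝ) :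
    coefA W x₀ n * (Real.exp x) ^ n = Real.exp ((n : ℝ) * x - psiA W x₀ n) := by
  rw [coefA, ← Real.exp_nat_mul, ← Real.exp_add]
  ring_nf

lemma term_le (hWpos : ∀ x, 0 < W x) (hWcont : Continuous W)
    (hcoer : Tendsto (fun x => x / W x) atTop (nhds 0)) (n : ℕ) {x : ℝ} (hx : x₀ ≤ x) :
    coefA W x₀ n * (Real.exp x) ^ n ≤ Real.exp (W (x + Real.log 2)) * (1 / 2) ^ n := by
  have hp := psi_ge hWpos hWcont hcoer (x₀ := x₀) n
    (x := x + Real.log 2) (le_add_of_le_of_nonneg hx (Real.log_nonneg (by norm_num)))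
  rw [coefA_exp]
  have h2 : ((1 : ℝ) / 2) ^ n = Real.exp (-((n : ℝ) * Real.log 2)) := by
    rw [Real.exp_neg, Real.exp_nat_mul, Real.exp_log (by norm_num : (0:ℝ) < 2), one_div,
      inv_pow]
  rw [h2, ← Real.exp_add, Real.exp_le_exp]
  nlinarith [hp]

lemma summable_term (hWpos : ∀ x, 0 < W x) (hWcont : Continuous W)
    (hcoer : Tendsto (fun x => x / W x) atTop (nhds 0)) {c : ℝ} (hc : 0 ≤ c) :
    Summable (fun n : ℕ => coefA W x₀ n * c ^ n) := by
  set x := max (Real.log c) x₀ with hxdef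
  have hcx : c ≤ Real.exp x := by
    rcases le_total c (Real.exp x₀) with h | h
    · exact h.trans (Real.exp_le_exp.mpr (le_max_right _ _))
    · have hc0 : 0 < c := lt_of_lt_of_le (Real.exp_pos _) h
      calc c = Real.exp (Real.log c) := (Real.exp_log hc0).symm
        _ ≤ Real.exp x := Real.exp_le_exp.mpr (le_max_left _ _)
  have hgeom : Summable (fun n : ℕ => Real.exp (W (x + Real.log 2)) * (1 / 2 : ℝ) ^ n) :=
    (summable_geometric_of_lt_one (by norm_num) (by norm_num)).mul_left _
  refine Summable.of_nonneg_of_le (fun n => mul_nonneg (coefA_pos n).le (pow_nonneg hc n)) (fun n => ?_) hgeom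
  calc coefA W x₀ n * c ^ n ≤ coefA W x₀ n * (Real.exp x) ^ n := by
        exact mul_le_mul_of_nonneg_left (pow_le_pow_left₀ hc hcx n) (coefA_pos n).le
    _ ≤ _ := term_le hWpos hWcont hcoer n (le_max_right _ _)

lemma FA_pos (hWpos : ∀ x, 0 < W x) (hWcont : Continuous W)
    (hcoer : Tendsto (fun x => x / W x) atTop (nhds 0)) {c : ℝ} (hc : 0 ≤ c) :
    0 < FA W x₀ c := by
  refine Summable.tsum_pos (summable_term hWpos hWcont hcoer hc) (fun n => mul_nonneg (coefA_pos n).le (pow_nonneg hc n)) 0 ?_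
  simpa using coefA_pos (W := W) (x₀ := x₀) 0

lemma le_FA (hWpos : ∀ x, 0 < W x) (hWcont : Continuous W)
    (hcoer : Tendsto (fun x => x / W x) atTop (nhds 0)) {c : ℝ} (hc : 0 ≤ c) (n : ℕ) :
    coefA W x₀ n * c ^ n ≤ FA W x₀ c :=
  Summable.le_tsum (summable_term hWpos hWcont hcoer hc) n (fun m _ => mul_nonneg (coefA_pos m).le (pow_nonneg hc m))

lemma FA_le (hWpos : ∀ x, 0 < W x) (hWcont : Continuous W)
    (hcoer : Tendsto (fun x => x / W x) atTop (nhds 0)) {x : ℝ} (hx : x₀ ≤ x) :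
    FA W x₀ (Real.exp x) ≤ 2 * Real.exp (W (x + Real.log 2)) := by
  have hgeom : Summable (fun n : ℕ => Real.exp (W (x + Real.log 2)) * (1 / 2 : ℝ) ^ n) :=
    (summable_geometric_of_lt_one (by norm_num) (by norm_num)).mul_left _
  have h1 : FA W x₀ (Real.exp x)
      ≤ ∑' n : ℕ, Real.exp (W (x + Real.log 2)) * (1 / 2 : ℝ) ^ n :=
    Summable.tsum_le_tsum (fun n => term_le hWpos hWcont hcoer n hx)
      (summable_term hWpos hWcont hcoer (Real.exp_pos x).le) hgeom
  have h2 : ∑' n : ℕ, Real.exp (W (x + Real.log 2)) * (1 / 2 : ℝ) ^ n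
      = 2 * Real.exp (W (x + Real.log 2)) := by
    rw [tsum_mul_left, tsum_geometric_of_lt_one (by norm_num) (by norm_num)]
    norm_num [mul_comm]
  linarith [h1, h2.symm.le]

lemma fA_real (hWpos : ∀ x, 0 < W x) (hWcont : Continuous W)
    (hcoer : Tendsto (fun x => x / W x) atTop (nhds 0)) (r : ℝ) :
    fA W x₀ (r : ℂ) = ((FA W x₀ r : ℝ) : ℂ) := by
  rw [fA, FA, Complex.ofReal_tsum]
  congr 1
  funext n
  push_cast
  ring


lemma FA_nonneg (hWpos : ∀ x, 0 < W x) (hWcont : Continuous W)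
    (hcoer : Tendsto (fun x => x / W x) atTop (nhds 0)) {c : ℝ} (hc : 0 ≤ c) :
    0 ≤ FA W x₀ c := (FA_pos hWpos hWcont hcoer hc).le

lemma summable_norm_term (hWpos : ∀ x, 0 < W x) (hWcont : Continuous W)
    (hcoer : Tendsto (fun x => x / W x) atTop (nhds 0)) (z : ℂ) :
    Summable (fun n : ℕ => ‖(coefA W x₀ n : ℂ) * z ^ n‖) := by
  have : (fun n : ℕ => ‖(coefA W x₀ n : ℂ) * z ^ n‖)
      = fun n : ℕ => coefA W x₀ n * ‖z‖ ^ n := by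
    funext n
    rw [norm_mul, norm_pow, Complex.norm_real, Real.norm_of_nonneg (coefA_pos n).le]
  rw [this]
  exact summable_term hWpos hWcont hcoer (norm_nonneg z)

lemma maxMod_eq (hWpos : ∀ x, 0 < W x) (hWcont : Continuous W)
    (hcoer : Tendsto (fun x => x / W x) atTop (nhds 0)) {r : ℝ} (hr : 0 ≤ r) :
    maxMod (fA W x₀) r = FA W x₀ r := by
  apply IsGreatest.csSup_eq
  constructor
  · refine ⟨(r : ℂ), ?_, ?_⟩
    · simp [Complex.dist_eq, abs_of_nonneg hr]
    · show ‖fA W x₀ (r : ℂ)‖ = FA W x₀ r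
      rw [fA_real hWpos hWcont hcoer]
      simp [Complex.norm_real, abs_of_nonneg (FA_nonneg hWpos hWcont hcoer hr)]
  · rintro y ⟨z, hz, rfl⟩
    have hzr : ‖z‖ = r := by simpa [Complex.dist_eq] using hz
    have h1 : ‖fA W x₀ z‖ ≤ ∑' n : ℕ, ‖(coefA W x₀ n : ℂ) * z ^ n‖ := by
      exact norm_tsum_le_tsum_norm (summable_norm_term hWpos hWcont hcoer z)
    have h2 : ∑' n : ℕ, ‖(coefA W x₀ n : ℂ) * z ^ n‖ = FA W x₀ r := by
      rw [FA]
      congr 1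
      funext n
      rw [norm_mul, norm_pow, Complex.norm_real, Real.norm_of_nonneg (coefA_pos n).le, hzr]
    rw [← h2]
    exact h1

lemma fA_diff (hWpos : ∀ x, 0 < W x) (hWcont : Continuous W)
    (hcoer : Tendsto (fun x => x / W x) atTop (nhds 0)) :
    Differentiable ℂ (fA W x₀) := by
  intro z
  set R : ℝ := ‖z‖ + 1 with hR
  have hR0 : 0 ≤ R := by positivity
  have hdo : DifferentiableOn ℂ (fun w : ℂ => ∑' n : ℕ, (coefA W x₀ n : ℂ) * w ^ n)
      (Metric.ball (0 : ℂ) R) := by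
    refine Complex.differentiableOn_tsum_of_summable_norm
      (u := fun n : ℕ => coefA W x₀ n * R ^ n)
      (summable_term hWpos hWcont hcoer hR0)
      (fun n => ((differentiable_const _).mul (differentiable_pow n)).differentiableOn)
      Metric.isOpen_ball (fun n w hw => ?_)
    have hwR : ‖w‖ ≤ R := by
      have := Metric.mem_ball.mp hw
      rw [dist_zero_right] at this
      exact this.le
    rw [norm_mul, norm_pow, Complex.norm_real, Real.norm_of_nonneg (coefA_pos n).le]
    exact mul_le_mul_of_nonneg_left (pow_le_pow_left₀ (norm_nonneg w) hwR n) (coefA_pos n).le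
  have hz : z ∈ Metric.ball (0 : ℂ) R := by
    rw [Metric.mem_ball, dist_zero_right, hR]
    linarith
  exact hdo.differentiableAt (Metric.isOpen_ball.mem_nhds hz)

lemma freq_lower (hWpos : ∀ x, 0 < W x) (hWcont : Continuous W)
    (hcoer : Tendsto (fun x => x / W x) atTop (nhds 0)) {B : ℝ} (hB : x₀ ≤ B) :
    ∃ y, B ≤ y ∧ x₀ ≤ y ∧ W y - 1 ≤ Real.log (FA W x₀ (Real.exp y)) := by
  set n : ℕ := ⌈W (B + 1) + 1⌉₊ with hn_def
  have hn : W (B + 1) + 1 ≤ (n : ℝ) := Nat.le_ceil _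
  have hpsi_lb : (n : ℝ) * (B + 1) - W (B + 1) ≤ psiA W x₀ n :=
    psi_ge hWpos hWcont hcoer n (by linarith)
  have hne : ((fun x => (n : ℝ) * x - W x) '' Ici x₀).Nonempty := ⟨_, ⟨x₀, mem_Ici.mpr le_rfl, rfl⟩⟩
  have hlt : psiA W x₀ n - 1 / 2 < sSup ((fun x => (n : ℝ) * x - W x) '' Ici x₀) := by
    rw [← psiA]
    linarith
  obtain ⟨v, ⟨y, hy, rfl⟩, hv⟩ := exists_lt_of_lt_csSup hne hlt
  have hyB : B ≤ y := by
    by_contra hyB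
    push_neg at hyB
    have h1 : (n : ℝ) * y ≤ (n : ℝ) * B :=
      mul_le_mul_of_nonneg_left hyB.le (Nat.cast_nonneg n)
    have h2 := hWpos y
    nlinarith
  refine ⟨y, hyB, hy, ?_⟩
  have hterm : Real.exp ((n : ℝ) * y - psiA W x₀ n) ≤ FA W x₀ (Real.exp y) := by
    rw [← coefA_exp]
    exact le_FA hWpos hWcont hcoer (Real.exp_pos y).le n
  have hFpos : 0 < FA W x₀ (Real.exp y) :=
    FA_pos hWpos hWcont hcoer (Real.exp_pos y).le
  have hlog := Real.log_le_log (Real.exp_pos _) hterm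
  rw [Real.log_exp] at hlog
  linarith

end Stmt18

/-- main theorem, sufficiency: if `ρ` is a zero proximate order with
`(ln r)/r^{ρ(r)} → 0`, then there is an entire transcendental function `f` with
`limsup ln M(r,f)/r^{ρ(r)} = 1`. -/
theorem stmt18 (ρ ρ' : ℝ → ℝ)
    (hderiv : ∀ r > 0, HasDerivAt ρ (ρ' r) r)
    (hρ0 : Tendsto ρ atTop (nhds 0))
    (hslow : Tendsto (fun r => r * ρ' r * Real.log r) atTop (nhds 0))
    (hlog : Tendsto (fun r => Real.log r / r ^ ρ r) atTop (nhds 0)) :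
    ∃ f : ℂ → ℂ, Differentiable ℂ f ∧
      (¬ ∃ p : Polynomial ℂ, ∀ z, f z = p.eval z) ∧
      limsup (fun r => Real.log (maxMod f r) / r ^ ρ r) atTop = 1 := by
  classical
  set φf : ℝ → ℝ := fun x => x * ρ (Real.exp x) with hφf
  set W : ℝ → ℝ := fun x => Real.exp (φf x) with hWdef
  have hWpos : ∀ x, 0 < W x := fun x => Real.exp_pos _
  have hρcont : ∀ r > 0, ContinuousAt ρ r := fun r hr => (hderiv r hr).continuousAt
  have hWcont : Continuous W := by
    apply Real.continuous_exp.comp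
    rw [continuous_iff_continuousAt]
    intro x
    exact continuousAt_id.mul ((hρcont _ (Real.exp_pos x)).comp Real.continuous_exp.continuousAt)
  have hrpow : ∀ r : ℝ, 0 < r → r ^ ρ r = W (Real.log r) := by
    intro r hr
    rw [Real.rpow_def_of_pos hr]
    simp only [hWdef, hφf]
    rw [Real.exp_log hr]
  have hcoer : Tendsto (fun x => x / W x) atTop (nhds 0) := by
    have h := hlog.comp Real.tendsto_exp_atTop
    refine h.congr (fun x => ?_)
    simp only [Function.comp_apply]
    rw [hrpow _ (Real.exp_pos x), Real.log_exp]
  have hWtop : Tendsto W atTop atTop := by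
    refine tendsto_atTop_mono' atTop ?_ tendsto_id
    have h1 : ∀ᶠ x in atTop, x / W x < 1 := hcoer.eventually (eventually_lt_nhds one_pos)
    filter_upwards [h1] with x hx
    have hW := hWpos x
    have : x < W x := by
      rw [div_lt_one hW] at hx
      exact hx
    exact this.le
  set d : ℝ → ℝ := fun x => ρ (Real.exp x) + x * (ρ' (Real.exp x) * Real.exp x) with hd
  have hderφ : ∀ x, HasDerivAt φf (d x) x := by
    intro x
    have h1 : HasDerivAt (fun y => ρ (Real.exp y)) (ρ' (Real.exp x) * Real.exp x) x :=
      (hderiv _ (Real.exp_pos x)).comp x (Real.hasDerivAt_exp x)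
    have h2 := (hasDerivAt_id x).fun_mul h1
    simpa [hd, hφf, one_mul, id_eq] using h2
  have hd0 : Tendsto d atTop (nhds 0) := by
    have t1 : Tendsto (fun x => ρ (Real.exp x)) atTop (nhds 0) := hρ0.comp Real.tendsto_exp_atTop
    have t2 : Tendsto (fun x => Real.exp x * ρ' (Real.exp x) * x) atTop (nhds 0) := by
      have h := hslow.comp Real.tendsto_exp_atTop
      refine h.congr fun x => ?_
      simp only [Function.comp_apply, Real.log_exp]
    have h3 := t1.add t2
    rw [add_zero] at h3
    refine h3.congr fun x => ?_
    simp only [hd]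
    ring
  have hdiff2 : Tendsto (fun x => φf (x + Real.log 2) - φf x) atTop (nhds 0) := by
    rw [Metric.tendsto_atTop]
    intro ε hε
    obtain ⟨N, hN⟩ := Metric.tendsto_atTop.mp hd0 ε hε
    refine ⟨N, fun x hx => ?_⟩
    have hlt : x < x + Real.log 2 := by linarith [Real.log_pos one_lt_two]
    obtain ⟨c, hc, hceq⟩ := exists_hasDerivAt_eq_slope φf d hlt
      (fun y _ => (hderφ y).continuousAt.continuousWithinAt)
      (fun y _ => hderφ y)
    have hl2 : x + Real.log 2 - x = Real.log 2 := by ring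
    rw [hl2] at hceq
    have hdc : dist (d c) 0 < ε := hN c (by linarith [hc.1])
    rw [Real.dist_eq, sub_zero] at hdc ⊢
    have hlog2pos : 0 < Real.log 2 := Real.log_pos one_lt_two
    have hφeq : φf (x + Real.log 2) - φf x = d c * Real.log 2 := by
      rw [hceq]
      field_simp
    rw [hφeq, abs_mul, abs_of_nonneg hlog2pos.le]
    have hlog2 : Real.log 2 ≤ 1 := by
      have := Real.add_one_le_exp (Real.log 2)
      nlinarith [Real.exp_log (show (0:ℝ) < 2 by norm_num)]
    nlinarith [abs_nonneg (d c)]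
  have hratio : Tendsto (fun x => W (x + Real.log 2) / W x) atTop (nhds 1) := by
    have h := (Real.continuous_exp.tendsto 0).comp hdiff2
    rw [Real.exp_zero] at h
    refine h.congr fun x => ?_
    simp only [Function.comp_apply, hWdef]
    rw [Real.exp_sub]
  set f : ℂ → ℂ := Stmt18.fA W 0 with hfdef
  have hmaxeq : ∀ r : ℝ, 0 ≤ r → maxMod f r = Stmt18.FA W 0 r := fun r hr =>
    Stmt18.maxMod_eq hWpos hWcont hcoer hr
  have hupper : ∀ r : ℝ, 1 ≤ r →
      Real.log (maxMod f r) ≤ Real.log 2 + W (Real.log r + Real.log 2) := by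
    intro r hr
    have hr0 : (0:ℝ) < r := by linarith
    have hlr : (0:ℝ) ≤ Real.log r := Real.log_nonneg hr
    have hFle : Stmt18.FA W 0 r ≤ 2 * Real.exp (W (Real.log r + Real.log 2)) := by
      have h := Stmt18.FA_le (x₀ := 0) hWpos hWcont hcoer hlr
      rwa [Real.exp_log hr0] at h
    rw [hmaxeq r hr0.le]
    have hFpos : 0 < Stmt18.FA W 0 r := Stmt18.FA_pos hWpos hWcont hcoer hr0.le
    calc Real.log (Stmt18.FA W 0 r) ≤ Real.log (2 * Real.exp (W (Real.log r + Real.log 2))) :=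
          Real.log_le_log hFpos hFle
      _ = Real.log 2 + W (Real.log r + Real.log 2) := by
          rw [Real.log_mul two_ne_zero (Real.exp_ne_zero _), Real.log_exp]
  have hfreq : ∀ B : ℝ, 0 ≤ B → ∃ y, B ≤ y ∧
      W y - 1 ≤ Real.log (maxMod f (Real.exp y)) ∧ (Real.exp y) ^ ρ (Real.exp y) = W y := by
    intro B hB
    obtain ⟨y, hyB, _, hylog⟩ := Stmt18.freq_lower (x₀ := 0) hWpos hWcont hcoer hB
    refine ⟨y, hyB, ?_, ?_⟩
    · rw [hmaxeq _ (Real.exp_pos y).le]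
      exact hylog
    · rw [hrpow _ (Real.exp_pos y), Real.log_exp]
  set g : ℝ → ℝ := fun r => Real.log (maxMod f r) / r ^ ρ r with hg
  set u : ℝ → ℝ := fun x => (Real.log 2 + W (x + Real.log 2)) / W x with hu
  have hgu : ∀ᶠ r in atTop, g r ≤ u (Real.log r) := by
    filter_upwards [eventually_ge_atTop (1 : ℝ)] with r hr
    have hr0 : (0:ℝ) < r := by linarith
    simp only [hg, hu]
    rw [hrpow r hr0]
    have hWp := hWpos (Real.log r)
    exact div_le_div_of_nonneg_right (hupper r hr) hWp.le
  have hutend : Tendsto (fun r => u (Real.log r)) atTop (nhds 1) := by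
    have h1 : Tendsto (fun x => Real.log 2 / W x) atTop (nhds 0) :=
      tendsto_const_nhds.div_atTop hWtop
    have h2 := h1.add hratio
    rw [zero_add] at h2
    have h3 : Tendsto u atTop (nhds 1) := by
      refine h2.congr fun x => ?_
      simp only [hu]
      rw [add_div]
    exact h3.comp Real.tendsto_log_atTop
  have hfreq2 : ∀ ε : ℝ, 0 < ε → ∃ᶠ r in atTop, 1 - ε ≤ g r := by
    intro ε hε
    rw [frequently_atTop]
    intro b
    obtain ⟨X, hX⟩ := eventually_atTop.mp (hWtop.eventually_ge_atTop (1/ε))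
    obtain ⟨y, hyB, hWy, hrpowy⟩ :=
      hfreq (max 0 (max X (Real.log (max b 1)))) (le_max_left _ _)
    have hyX : X ≤ y := le_trans (le_max_of_le_right (le_max_left _ _)) hyB
    have hyb : Real.log (max b 1) ≤ y := le_trans (le_max_of_le_right (le_max_right _ _)) hyB
    refine ⟨Real.exp y, ?_, ?_⟩
    · have hmb : (0:ℝ) < max b 1 := lt_of_lt_of_le one_pos (le_max_right _ _)
      have : max b 1 ≤ Real.exp y := by
        rw [← Real.exp_log hmb]
        exact Real.exp_le_exp.mpr hyb
      exact le_trans (le_max_left _ _) this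
    · simp only [hg]
      rw [hrpowy]
      have hWp := hWpos y
      rw [le_div_iff₀ hWp]
      have hWbig : 1/ε ≤ W y := hX y hyX
      have h1 : 1 ≤ ε * W y := by
        rw [div_le_iff₀ hε] at hWbig
        linarith [hWbig]
      nlinarith
  have hbdd : IsBoundedUnder (· ≤ ·) atTop g := by
    refine ⟨2, ?_⟩
    rw [eventually_map]
    filter_upwards [hgu, hutend.eventually (eventually_le_nhds (by norm_num : (1:ℝ) < 2))]
      with r h1 h2
    exact h1.trans h2
  have hcob : IsCoboundedUnder (· ≤ ·) atTop g :=
    Filter.IsCoboundedUnder.of_frequently_ge (hfreq2 (1/2) (by norm_num))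
  have step1 : ∀ ε : ℝ, 0 < ε → limsup g atTop ≤ 1 + ε := by
    intro ε hε
    refine limsup_le_of_le hcob ?_
    filter_upwards [hgu, hutend.eventually (eventually_le_nhds (by linarith : (1:ℝ) < 1 + ε))]
      with r h1 h2
    exact h1.trans h2
  have step2 : ∀ ε : ℝ, 0 < ε → 1 - ε ≤ limsup g atTop := fun ε hε =>
    le_limsup_of_frequently_le (hfreq2 ε hε) hbdd
  have hlimsup : limsup g atTop = 1 := by
    by_contra hne
    rcases lt_or_gt_of_ne hne with h | h
    · have := step2 ((1 - limsup g atTop)/2) (by linarith)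
      linarith
    · have := step1 ((limsup g atTop - 1)/2) (by linarith)
      linarith
  refine ⟨f, Stmt18.fA_diff hWpos hWcont hcoer, ?_, hlimsup⟩
  rintro ⟨p, hp⟩
  set dd := p.natDegree with hdd
  set C : ℝ := ∑ i ∈ Finset.range (dd + 1), ‖p.coeff i‖ with hC
  have hFC : ∀ r : ℝ, 1 ≤ r → Stmt18.FA W 0 r ≤ C * r ^ dd := by
    intro r hr
    have hr0 : (0:ℝ) ≤ r := by linarith
    have h1 : Stmt18.FA W 0 r = ‖f (r : ℂ)‖ := by
      show Stmt18.FA W 0 r = ‖Stmt18.fA W 0 (r : ℂ)‖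
      rw [Stmt18.fA_real hWpos hWcont hcoer]
      rw [Complex.norm_real, Real.norm_of_nonneg (Stmt18.FA_nonneg hWpos hWcont hcoer hr0)]
    rw [h1, hp]
    rw [Polynomial.eval_eq_sum_range]
    calc ‖∑ i ∈ Finset.range (dd+1), p.coeff i * (r:ℂ)^i‖
        ≤ ∑ i ∈ Finset.range (dd+1), ‖p.coeff i * (r:ℂ)^i‖ :=
          norm_sum_le _ _
      _ ≤ ∑ i ∈ Finset.range (dd+1), ‖p.coeff i‖ * r ^ dd := by
          apply Finset.sum_le_sum
          intro i hi
          rw [norm_mul, norm_pow, Complex.norm_real, Real.norm_of_nonneg hr0]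
          exact mul_le_mul_of_nonneg_left
            (pow_le_pow_right₀ hr (Nat.lt_succ_iff.mp (Finset.mem_range.mp hi)))
            (norm_nonneg _)
      _ = C * r ^ dd := by rw [← Finset.sum_mul]
  have hCpos : 0 < C := by
    have h1 : 0 < Stmt18.FA W 0 (1:ℝ) :=
      Stmt18.FA_pos hWpos hWcont hcoer (by norm_num : (0:ℝ) ≤ 1)
    have h2 := hFC 1 le_rfl
    simpa using lt_of_lt_of_le h1 h2
  have hev : ∀ᶠ x in atTop, x / W x < 1 / ((dd:ℝ) + 1) :=
    hcoer.eventually (eventually_lt_nhds (by positivity))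
  obtain ⟨X, hX⟩ := eventually_atTop.mp hev
  obtain ⟨y, hyB, hWy, _⟩ :=
    hfreq (max 0 (max X (max 1 (Real.log C + 2)))) (le_max_left _ _)
  have hyX : X ≤ y := le_trans (le_max_of_le_right (le_max_left _ _)) hyB
  have hy1 : 1 ≤ y := le_trans (le_max_of_le_right (le_max_of_le_right (le_max_left _ _))) hyB
  have hyC : Real.log C + 2 ≤ y :=
    le_trans (le_max_of_le_right (le_max_of_le_right (le_max_right _ _))) hyB
  have hWlb : ((dd:ℝ)+1) * y ≤ W y := by
    have hdiv := hX y hyX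
    have hWp := hWpos y
    rw [div_lt_div_iff₀ hWp (by positivity)] at hdiv
    nlinarith
  have hexp1 : (1:ℝ) ≤ Real.exp y := Real.one_le_exp (by linarith)
  have hFy := hFC (Real.exp y) hexp1
  have hFpos : 0 < Stmt18.FA W 0 (Real.exp y) :=
    Stmt18.FA_pos hWpos hWcont hcoer (Real.exp_pos y).le
  have hup : Real.log (Stmt18.FA W 0 (Real.exp y)) ≤ Real.log C + dd * y := by
    have h := Real.log_le_log hFpos hFy
    rwa [Real.log_mul (ne_of_gt hCpos) (pow_ne_zero _ (Real.exp_ne_zero y)),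
      Real.log_pow, Real.log_exp] at h
  rw [hmaxeq _ (Real.exp_pos y).le] at hWy
  nlinarith [hWy, hup, hWlb]
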